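/- Let Γ be a group generated by a finite set S not containing the identity. For every n ≥ 1, the number of simple graphs on vertex set {1,…,n} that are isomorphic to an induced subgraph of the Cayley graph Cay(Γ, S) is at most (2|S|(n+1))^{n−1}. (The class of finite induced subgraphs of a Cayley graph of a finitely generated group is small.) -/

import Mathlib

/-- The Cayley graph of a group `Γ` with respect to a set `S` of generators. -/
def cayley (Γ : Type*) [Group Γ] (S : Finset Γ) : SimpleGraph Γ where
  Adj x y := x ≠ y ∧ ∃ s ∈ S, y = x * s ∨ x = y * s
  symm := ⟨by rintro x y ⟨hne, s, hs, h⟩; exact ⟨hne.symm, s, hs, h.symm⟩⟩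
  loopless := ⟨fun x h => h.1 rfl⟩

lemma cayley_adj {Γ : Type*} [Group Γ] {S : Finset Γ} {x y : Γ} :
    (cayley Γ S).Adj x y ↔ x ≠ y ∧ ∃ s ∈ S, y = x * s ∨ x = y * s := Iff.rfl

lemma cayley_adj_iff {Γ : Type*} [Group Γ] {S : Finset Γ} {x y : Γ} :
    (cayley Γ S).Adj x y ↔ x ≠ y ∧ ∃ s ∈ S, x⁻¹ * y = s ∨ y⁻¹ * x = s := by
  simp only [cayley_adj, inv_mul_eq_iff_eq_mul]

lemma exists_adj_dist_lt {V : Type*} (G : SimpleGraph V) {r v : V}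
    (h : G.Reachable r v) (hne : v ≠ r) :
    ∃ u, G.Adj u v ∧ G.dist r u < G.dist r v := by
  obtain ⟨p, hp⟩ := h.exists_walk_length_eq_dist
  obtain ⟨w, hadj, q, hq⟩ := SimpleGraph.Walk.exists_eq_cons_of_ne hne p.reverse
  refine ⟨w, hadj.symm, ?_⟩
  have h1 : G.dist r w ≤ q.reverse.length := SimpleGraph.dist_le _
  have h2 : p.reverse.length = q.length + 1 := by rw [hq]; simp
  have h3 := SimpleGraph.Walk.length_reverse p
  have h4 := SimpleGraph.Walk.length_reverse q
  omega

open scoped Classical in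
noncomputable def myroot {n : ℕ} (G : SimpleGraph (Fin n)) (v : Fin n) : Fin n :=
  (Finset.filter (fun u => G.Reachable u v) Finset.univ).min'
    ⟨v, Finset.mem_filter.2 ⟨Finset.mem_univ v, SimpleGraph.Reachable.refl v⟩⟩

open scoped Classical in
lemma myroot_mem {n : ℕ} (G : SimpleGraph (Fin n)) (v : Fin n) :
    myroot G v ∈ Finset.filter (fun u => G.Reachable u v) Finset.univ := by
  unfold myroot
  exact Finset.min'_mem _ _

lemma myroot_reachable {n : ℕ} (G : SimpleGraph (Fin n)) (v : Fin n) :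
    G.Reachable (myroot G v) v := by
  classical
  have := myroot_mem G v
  simp only [Finset.mem_filter] at this
  exact this.2

open scoped Classical in
lemma myroot_le_of_reachable {n : ℕ} {G : SimpleGraph (Fin n)} {x v : Fin n}
    (h : G.Reachable x v) : myroot G v ≤ x := by
  unfold myroot
  refine Finset.min'_le _ x ?_
  simp only [Finset.mem_filter]
  exact ⟨Finset.mem_univ x, h⟩

lemma myroot_le {n : ℕ} (G : SimpleGraph (Fin n)) (v : Fin n) : myroot G v ≤ v :=
  myroot_le_of_reachable (SimpleGraph.Reachable.refl v)

lemma myroot_eq_of_reachable {n : ℕ} {G : SimpleGraph (Fin n)} {u v : Fin n}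
    (h : G.Reachable u v) : myroot G u = myroot G v :=
  le_antisymm (myroot_le_of_reachable ((myroot_reachable G v).trans h.symm))
    (myroot_le_of_reachable ((myroot_reachable G u).trans h))

def tmul {Γ : Type*} [Group Γ] (S : Finset Γ) (t : {s : Γ // s ∈ S} × Bool) : Γ :=
  if t.2 then t.1.1 else t.1.1⁻¹

def GoodData {Γ : Type*} [Group Γ] (S : Finset Γ) {n : ℕ} (G : SimpleGraph (Fin n))
    (f : Fin n → Γ) (D : Fin n → Option (Fin n × ({s : Γ // s ∈ S} × Bool))) : Prop :=
  ∀ v, (v = myroot G v → D v = none) ∧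
    (v ≠ myroot G v → ∃ u t, D v = some (u, t) ∧ G.Adj u v ∧
      G.dist (myroot G v) u < G.dist (myroot G v) v ∧ f v = f u * tmul S t)

lemma exists_goodData {Γ : Type*} [Group Γ] (S : Finset Γ) {n : ℕ}
    (G : SimpleGraph (Fin n)) (f : Fin n → Γ)
    (hiff : ∀ u v, G.Adj u v ↔ (cayley Γ S).Adj (f u) (f v)) :
    ∃ D, GoodData S G f D := by
  classical
  have H : ∀ v, v ≠ myroot G v → ∃ (u : Fin n) (t : {s : Γ // s ∈ S} × Bool),
      G.Adj u v ∧ G.dist (myroot G v) u < G.dist (myroot G v) v ∧ f v = f u * tmul S t := by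
    intro v hv
    obtain ⟨u, hadj, hd⟩ := exists_adj_dist_lt G (myroot_reachable G v) hv
    obtain ⟨hne, s, hs, hcase⟩ := (hiff u v).1 hadj
    rcases hcase with h | h
    · exact ⟨u, ⟨⟨s, hs⟩, true⟩, hadj, hd, by simpa [tmul] using h⟩
    · refine ⟨u, ⟨⟨s, hs⟩, false⟩, hadj, hd, ?_⟩
      rw [h]; simp [tmul]
  choose u t h1 h2 h3 using H
  refine ⟨fun v => if hv : v = myroot G v then none else some (u v hv, t v hv),
    fun v => ⟨fun hv => dif_pos hv, fun hv => ⟨u v hv, t v hv, dif_neg hv,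
      h1 v hv, h2 v hv, h3 v hv⟩⟩⟩

lemma goodData_key {Γ : Type*} [Group Γ] {S : Finset Γ} {n : ℕ}
    {G₁ G₂ : SimpleGraph (Fin n)} {f₁ f₂ : Fin n → Γ}
    {D : Fin n → Option (Fin n × ({s : Γ // s ∈ S} × Bool))}
    (h₁ : GoodData S G₁ f₁ D) (h₂ : GoodData S G₂ f₂ D) (v : Fin n) :
    myroot G₁ v = myroot G₂ v ∧
      (f₁ (myroot G₁ v))⁻¹ * f₁ v = (f₂ (myroot G₂ v))⁻¹ * f₂ v := by
  suffices H : ∀ d (v : Fin n), G₁.dist (myroot G₁ v) v < d →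
      myroot G₁ v = myroot G₂ v ∧
        (f₁ (myroot G₁ v))⁻¹ * f₁ v = (f₂ (myroot G₂ v))⁻¹ * f₂ v from
    H _ v (Nat.lt_succ_self _)
  intro d
  induction d with
  | zero => intro v hv; omega
  | succ d ih =>
    intro v hv
    by_cases hr : v = myroot G₁ v
    · have hD : D v = none := (h₁ v).1 hr
      have hr2 : v = myroot G₂ v := by
        by_contra hc
        obtain ⟨u, t, hDv, -⟩ := (h₂ v).2 hc
        rw [hD] at hDv; exact Option.some_ne_none _ hDv.symm
      exact ⟨by rw [← hr, ← hr2], by rw [← hr, ← hr2]; simp⟩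
    · obtain ⟨u, t, hDv, hadj, hdist, hmul⟩ := (h₁ v).2 hr
      have hr2 : v ≠ myroot G₂ v := by
        intro hc; rw [(h₂ v).1 hc] at hDv; exact Option.some_ne_none _ hDv.symm
      obtain ⟨u', t', hDv', hadj', hdist', hmul'⟩ := (h₂ v).2 hr2
      rw [hDv] at hDv'
      simp only [Option.some.injEq, Prod.mk.injEq] at hDv'
      obtain ⟨rfl, rfl⟩ := hDv'
      have e1 : myroot G₁ u = myroot G₁ v := myroot_eq_of_reachable hadj.reachable
      have e2 : myroot G₂ u = myroot G₂ v := myroot_eq_of_reachable hadj'.reachable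
      have ihu := ih u (by rw [e1]; omega)
      constructor
      · rw [← e1, ihu.1, e2]
      · rw [hmul, hmul', ← e1, ← e2, ← mul_assoc, ← mul_assoc, ihu.2]

lemma goodData_graphs_eq {Γ : Type*} [Group Γ] {S : Finset Γ} {n : ℕ}
    {G₁ G₂ : SimpleGraph (Fin n)} {f₁ f₂ : Fin n → Γ}
    {D : Fin n → Option (Fin n × ({s : Γ // s ∈ S} × Bool))}
    (hinj₁ : Function.Injective f₁)
    (hiff₁ : ∀ u v, G₁.Adj u v ↔ (cayley Γ S).Adj (f₁ u) (f₁ v))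
    (hinj₂ : Function.Injective f₂)
    (hiff₂ : ∀ u v, G₂.Adj u v ↔ (cayley Γ S).Adj (f₂ u) (f₂ v))
    (h₁ : GoodData S G₁ f₁ D) (h₂ : GoodData S G₂ f₂ D) : G₁ = G₂ := by
  ext u v
  by_cases huv : u = v
  · subst huv; simp
  by_cases hroot : myroot G₁ u = myroot G₁ v
  · have Hu := goodData_key h₁ h₂ u
    have Hv := goodData_key h₁ h₂ v
    have e2 : myroot G₂ u = myroot G₂ v := by rw [← Hu.1, ← Hv.1, hroot]
    have hq : (f₁ u)⁻¹ * f₁ v = (f₂ u)⁻¹ * f₂ v := by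
      have k1 : (f₁ u)⁻¹ * f₁ v =
          ((f₁ (myroot G₁ u))⁻¹ * f₁ u)⁻¹ * ((f₁ (myroot G₁ v))⁻¹ * f₁ v) := by
        rw [hroot]; group
      have k2 : (f₂ u)⁻¹ * f₂ v =
          ((f₂ (myroot G₂ u))⁻¹ * f₂ u)⁻¹ * ((f₂ (myroot G₂ v))⁻¹ * f₂ v) := by
        rw [e2]; group
      rw [k1, k2, Hu.2, Hv.2]
    have hq' : (f₁ v)⁻¹ * f₁ u = (f₂ v)⁻¹ * f₂ u := by
      have := congrArg (·⁻¹) hq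
      simpa [mul_inv_rev] using this
    have hne₁ : f₁ u ≠ f₁ v := fun h => huv (hinj₁ h)
    have hne₂ : f₂ u ≠ f₂ v := fun h => huv (hinj₂ h)
    rw [hiff₁ u v, hiff₂ u v, cayley_adj_iff, cayley_adj_iff, hq, hq']
    simp [hne₁, hne₂]
  · have hroot2 : myroot G₂ u ≠ myroot G₂ v := by
      rw [← (goodData_key h₁ h₂ u).1, ← (goodData_key h₁ h₂ v).1]; exact hroot
    exact iff_of_false (fun h => hroot (myroot_eq_of_reachable h.reachable))
      (fun h => hroot2 (myroot_eq_of_reachable h.reachable))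

/-- the class of finite induced subgraphs of a Cayley graph of a finitely
generated group is small: the number of labeled graphs on `{1,…,n}` isomorphic to an induced
subgraph of `Cay(Γ, S)` is at most `(2|S|(n+1))^(n-1)`. -/
theorem cayley_induced_subgraphs_small (Γ : Type*) [Group Γ] [DecidableEq Γ] (S : Finset Γ)
    (hgen : Subgroup.closure (S : Set Γ) = ⊤) (hid : (1 : Γ) ∉ S) (n : ℕ) (hn : 1 ≤ n) :
    Set.ncard {G : SimpleGraph (Fin n) | ∃ f : Fin n → Γ, Function.Injective f ∧
        ∀ u v : Fin n, G.Adj u v ↔ (cayley Γ S).Adj (f u) (f v)} ≤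
      (2 * S.card * (n + 1)) ^ (n - 1) := by
  classical
  obtain ⟨m, rfl⟩ : ∃ m, n = m + 1 := ⟨n - 1, by omega⟩
  simp only [Nat.add_sub_cancel]
  set A := {G : SimpleGraph (Fin (m + 1)) | ∃ f : Fin (m + 1) → Γ, Function.Injective f ∧
      ∀ u v : Fin (m + 1), G.Adj u v ↔ (cayley Γ S).Adj (f u) (f v)} with hA
  rcases Finset.eq_empty_or_nonempty S with hS | hS
  · subst hS
    rcases Nat.eq_zero_or_pos m with rfl | hm
    · -- n = 1 : at most one graph on Fin 1
      have hsub : Subsingleton (SimpleGraph (Fin 1)) := by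
        constructor
        intro G H
        ext u v
        have : u = v := Subsingleton.elim u v
        subst this
        simp
      have : A ⊆ Set.univ := Set.subset_univ _
      calc A.ncard ≤ (Set.univ : Set (SimpleGraph (Fin 1))).ncard :=
            Set.ncard_le_ncard this Set.finite_univ
        _ = Nat.card (SimpleGraph (Fin 1)) := Set.ncard_univ _
        _ ≤ 1 := le_of_eq (@Nat.card_of_subsingleton _ ⊥ hsub)
        _ = (2 * Finset.card ∅ * (0 + 1 + 1)) ^ 0 := by simp
    · -- m ≥ 1, S = ∅ : Γ is trivial, so no injective map exists
      have htriv : ∀ x : Γ, x = 1 := by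
        intro x
        have hx : x ∈ (⊤ : Subgroup Γ) := Subgroup.mem_top x
        rw [← hgen] at hx
        simpa [Subgroup.mem_bot] using hx
      have hAe : A = ∅ := by
        ext G
        simp only [hA, Set.mem_setOf_eq, Set.mem_empty_iff_false, iff_false]
        rintro ⟨f, hfinj, -⟩
        have h01 : (⟨0, by omega⟩ : Fin (m + 1)) = ⟨1, by omega⟩ := by
          apply hfinj
          rw [htriv (f ⟨0, by omega⟩), htriv (f ⟨1, by omega⟩)]
        simpa using congrArg Fin.val h01
      rw [hAe]
      simp
  · -- main case : S nonempty
    have hD : ∀ G ∈ A, ∃ (f : Fin (m + 1) → Γ)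
        (D : Fin (m + 1) → Option (Fin (m + 1) × ({s : Γ // s ∈ S} × Bool))),
        Function.Injective f ∧
        (∀ u v, G.Adj u v ↔ (cayley Γ S).Adj (f u) (f v)) ∧ GoodData S G f D := by
      rintro G ⟨f, hfinj, hfiff⟩
      obtain ⟨D, hgood⟩ := exists_goodData S G f hfiff
      exact ⟨f, D, hfinj, hfiff, hgood⟩
    choose f D hfinj hfiff hgood using hD
    set Φ : SimpleGraph (Fin (m + 1)) → (Fin m → Option (Fin (m + 1) × ({s : Γ // s ∈ S} × Bool))) :=
      fun G => if hG : G ∈ A then (fun i => D G hG ⟨i.1 + 1, by omega⟩) else fun _ => none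
      with hΦ
    have hΦinj : Set.InjOn Φ A := by
      intro G₁ hG₁ G₂ hG₂ heq
      have hDeq : D G₁ hG₁ = D G₂ hG₂ := by
        funext v
        by_cases hv : v = 0
        · subst hv
          have r₁ : (0 : Fin (m + 1)) = myroot G₁ 0 :=
            le_antisymm (Fin.zero_le _) (myroot_le G₁ 0)
          have r₂ : (0 : Fin (m + 1)) = myroot G₂ 0 :=
            le_antisymm (Fin.zero_le _) (myroot_le G₂ 0)
          rw [(hgood G₁ hG₁ 0).1 r₁, (hgood G₂ hG₂ 0).1 r₂]
        · have hv1 : 1 ≤ v.1 := by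
            rcases Nat.eq_zero_or_pos v.1 with h0 | h1
            · exact absurd (Fin.ext h0) hv
            · exact h1
          have hvm : v.1 - 1 < m := by omega
          have := congrFun heq ⟨v.1 - 1, hvm⟩
          simp only [hΦ, dif_pos hG₁, dif_pos hG₂] at this
          have hvv : (⟨(v.1 - 1) + 1, by omega⟩ : Fin (m + 1)) = v := by
            apply Fin.ext; simp; omega
          rwa [hvv] at this
      exact goodData_graphs_eq (hfinj G₁ hG₁) (hfiff G₁ hG₁) (hfinj G₂ hG₂) (hfiff G₂ hG₂)
        (hgood G₁ hG₁) (hDeq ▸ hgood G₂ hG₂)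
    have hScard : 1 ≤ S.card := Finset.card_pos.mpr hS
    calc A.ncard = (Φ '' A).ncard := (Set.ncard_image_of_injOn hΦinj).symm
      _ ≤ (Set.univ : Set (Fin m → Option (Fin (m + 1) × ({s : Γ // s ∈ S} × Bool)))).ncard :=
          Set.ncard_le_ncard (Set.subset_univ _) Set.finite_univ
      _ = Fintype.card (Fin m → Option (Fin (m + 1) × ({s : Γ // s ∈ S} × Bool))) := by
          rw [Set.ncard_univ, Nat.card_eq_fintype_card]
      _ = ((m + 1) * (S.card * 2) + 1) ^ m := by
          simp [Fintype.card_option, Fintype.card_prod, Fintype.card_bool, Fintype.card_coe]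
      _ ≤ (2 * S.card * (m + 1 + 1)) ^ m := by
          apply Nat.pow_le_pow_left
          nlinarith
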